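/- Let P = {x : ⟪x,s⟫ = t} and Q = {x : ⟪x,s'⟫ = u} be two hyperplanes each meeting the open unit ball of ℝ^{n+1} (|t| < 1, |u| < 1) with non-parallel unit normals s' ≠ ±s. If additionally the affine (n−1)-dimensional subspace P ∩ Q meets the open unit ball, then the complement of P ∪ Q in the unit sphere S^n (n ≥ 2) has exactly 4 connected components; if P ∩ Q is disjoint from the closed unit ball, the complement S^n \ (P ∪ Q) has exactly 3 connected components. -/

import Mathlib

open scoped InnerProductSpace
open Set

section Helpers

/-- Counting components from a clopen preconnected partition. -/
theorem comp_count {X : Type*} [TopologicalSpace X] {ι : Type*} [Fintype ι]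
    (U : ι → Set X) (ho : ∀ i, IsOpen (U i)) (hp : ∀ i, IsPreconnected (U i))
    (hd : Pairwise (Function.onFun Disjoint U)) (hc : ⋃ i, U i = univ) :
    Nat.card (ConnectedComponents X) = Nat.card {i // (U i).Nonempty} := by
  classical
  have hmem : ∀ x : X, ∃ i, x ∈ U i := by
    intro x
    have : x ∈ ⋃ i, U i := hc ▸ mem_univ x
    simpa using this
  have huniq : ∀ {x : X} {i j : ι}, x ∈ U i → x ∈ U j → i = j := by
    intro x i j hi hj
    by_contra hne
    exact (hd hne).le_bot ⟨hi, hj⟩ |>.elim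
  have hclopen : ∀ i, IsClopen (U i) := by
    intro i
    refine ⟨?_, ho i⟩
    have : (U i)ᶜ = ⋃ j ∈ ({i}ᶜ : Set ι), U j := by
      ext x
      obtain ⟨k, hk⟩ := hmem x
      simp only [mem_compl_iff, mem_iUnion, mem_singleton_iff]
      constructor
      · intro hx; exact ⟨k, fun h => hx (h ▸ hk), hk⟩
      · rintro ⟨j, hj, hxj⟩ hxi; exact hj (huniq hxj hxi)
    rw [← isOpen_compl_iff, this]
    exact isOpen_biUnion fun j _ => ho j
  have hsub : ∀ {x : X} {i : ι}, x ∈ U i → connectedComponent x ⊆ U i := by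
    intro x i hx
    exact isPreconnected_connectedComponent.subset_isClopen (hclopen i)
      ⟨x, mem_connectedComponent, hx⟩
  refine Nat.card_congr (Equiv.ofBijective
    (fun c => Quotient.liftOn' c (fun x => (⟨(hmem x).choose, ⟨x, (hmem x).choose_spec⟩⟩ :
        {i // (U i).Nonempty})) ?_) ⟨?_, ?_⟩)
  · intro x y (h : connectedComponent x = connectedComponent y)
    have hy : y ∈ connectedComponent x := h ▸ mem_connectedComponent
    have := hsub (hmem x).choose_spec hy
    exact Subtype.ext (huniq this (hmem y).choose_spec)
  · intro c₁ c₂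
    refine Quotient.inductionOn₂' c₁ c₂ fun x y h => ?_
    simp only [Quotient.liftOn'_mk'', Subtype.mk.injEq] at h
    have hx : x ∈ U (hmem x).choose := (hmem x).choose_spec
    have hy : y ∈ U (hmem x).choose := by
      have h' : (hmem x).choose = (hmem y).choose := congrArg Subtype.val h
      rw [h']; exact (hmem y).choose_spec
    have : y ∈ connectedComponent x :=
      (hp _).subset_connectedComponent hx hy
    have h2 := connectedComponent_eq this
    exact ConnectedComponents.coe_eq_coe.mpr h2
  · rintro ⟨i, x, hx⟩
    refine ⟨ConnectedComponents.mk x, ?_⟩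
    have hx' : x ∈ U (hmem x).choose := (hmem x).choose_spec
    exact Subtype.ext (huniq hx' hx)

/-- Push a point of a disk-quadrant to the circle. -/
theorem push_to_circle (c d t u ε₁ ε₂ α β : ℝ) (hd : 0 < d)
    (hε₁ : ε₁ = 1 ∨ ε₁ = -1) (hε₂ : ε₂ = 1 ∨ ε₂ = -1)
    (hn : α ^ 2 + β ^ 2 ≤ 1) (h1 : ε₁ * (α - t) > 0) (h2 : ε₂ * (c * α + d * β - u) > 0) :
    ∃ α' β', α' ^ 2 + β' ^ 2 = 1 ∧ ε₁ * (α' - t) > 0 ∧ ε₂ * (c * α' + d * β' - u) > 0 := by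
  have hε₁sq : ε₁ * ε₁ = 1 := by rcases hε₁ with h | h <;> rw [h] <;> ring
  have hε₂sq : ε₂ * ε₂ = 1 := by rcases hε₂ with h | h <;> rw [h] <;> ring
  set δ : ℝ := (ε₂ - c * ε₁) / d with hδ
  set N : ℝ → ℝ := fun τ => (α + τ * ε₁) ^ 2 + (β + τ * δ) ^ 2 with hN
  have hcont : ContinuousOn N (Icc 0 (|α| + 1)) := by fun_prop
  have hT : 1 ≤ N (|α| + 1) := by
    have hb := sq_nonneg (β + (|α| + 1) * δ)
    rcases hε₁ with h | h <;> subst h <;> simp only [hN] <;>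
      nlinarith [le_abs_self α, neg_abs_le α, abs_nonneg α]
  have h0 : N 0 ≤ 1 := by simpa [hN] using hn
  have hTpos : (0 : ℝ) ≤ |α| + 1 := by positivity
  have := intermediate_value_Icc hTpos hcont
  have h1mem : (1 : ℝ) ∈ Icc (N 0) (N (|α| + 1)) := ⟨h0, hT⟩
  obtain ⟨τ, hτmem, hτ⟩ := this h1mem
  refine ⟨α + τ * ε₁, β + τ * δ, hτ, ?_, ?_⟩
  · have : ε₁ * (α + τ * ε₁ - t) = ε₁ * (α - t) + τ * (ε₁ * ε₁) := by ring
    rw [this, hε₁sq]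
    have := hτmem.1
    nlinarith
  · have hkey : c * (α + τ * ε₁) + d * (β + τ * δ) - u
        = (c * α + d * β - u) + τ * ε₂ := by
      rw [hδ]; field_simp; ring
    rw [hkey]
    have : ε₂ * ((c * α + d * β - u) + τ * ε₂) = ε₂ * (c * α + d * β - u) + τ * (ε₂ * ε₂) := by ring
    rw [this, hε₂sq]
    have := hτmem.1
    nlinarith

theorem exists_pos_of_lt_one {f : ℝ → ℝ} (hf : Continuous f) (h0 : f 0 < 1) :
    ∃ τ : ℝ, 0 < τ ∧ f τ < 1 := by
  have : ∀ᶠ τ in nhds (0 : ℝ), f τ < 1 :=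
    (hf.continuousAt (x := 0)).eventually_lt continuousAt_const h0
  rw [Metric.eventually_nhds_iff] at this
  obtain ⟨δ, hδ, h⟩ := this
  exact ⟨δ / 2, by positivity, h (by rw [Real.dist_eq, sub_zero, abs_of_pos (by positivity)]; linarith)⟩

/-- If the intersection point of the two lines is in the open disk, all four
disk-quadrants are nonempty. -/
theorem case1_nonempty (c d t u α₀ β₀ ε₁ ε₂ : ℝ) (hd : 0 < d)
    (hn : α₀ ^ 2 + β₀ ^ 2 < 1) (h1 : α₀ = t) (h2 : c * α₀ + d * β₀ = u)
    (hε₁ : ε₁ = 1 ∨ ε₁ = -1) (hε₂ : ε₂ = 1 ∨ ε₂ = -1) :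
    ∃ α β, α ^ 2 + β ^ 2 ≤ 1 ∧ ε₁ * (α - t) > 0 ∧ ε₂ * (c * α + d * β - u) > 0 := by
  have hε₁sq : ε₁ * ε₁ = 1 := by rcases hε₁ with h | h <;> rw [h] <;> ring
  have hε₂sq : ε₂ * ε₂ = 1 := by rcases hε₂ with h | h <;> rw [h] <;> ring
  set δ : ℝ := (ε₂ - c * ε₁) / d with hδ
  have hcont : Continuous (fun τ : ℝ => (α₀ + τ * ε₁) ^ 2 + (β₀ + τ * δ) ^ 2) := by fun_prop
  obtain ⟨τ, hτpos, hτ⟩ := exists_pos_of_lt_one hcont (by simpa using hn)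
  refine ⟨α₀ + τ * ε₁, β₀ + τ * δ, le_of_lt hτ, ?_, ?_⟩
  · have : ε₁ * (α₀ + τ * ε₁ - t) = ε₁ * (α₀ - t) + τ * (ε₁ * ε₁) := by ring
    rw [this, hε₁sq, h1]
    simpa using hτpos
  · have hkey : c * (α₀ + τ * ε₁) + d * (β₀ + τ * δ) - u
        = (c * α₀ + d * β₀ - u) + τ * ε₂ := by
      rw [hδ]; field_simp; ring
    rw [hkey, h2]
    have : ε₂ * (u - u + τ * ε₂) = τ * (ε₂ * ε₂) := by ring
    rw [this, hε₂sq]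
    simpa using hτpos

/-- sign attached to a boolean -/
noncomputable def sg (b : Bool) : ℝ := if b then 1 else -1

theorem sg_or (b : Bool) : sg b = 1 ∨ sg b = -1 := by cases b <;> simp [sg]

theorem sg_ne_zero (b : Bool) : sg b ≠ 0 := by rcases sg_or b with h | h <;> rw [h] <;> norm_num

theorem sg_mul_self (b : Bool) : sg b * sg b = 1 := by cases b <;> simp [sg]

/-- Case 2: the crossing point lies strictly outside the closed disk; exactly one quadrant
misses the closed disk, the other three meet it. -/
theorem case2_count (c d t u : ℝ) (hd : 0 < d) (hc : c ^ 2 + d ^ 2 = 1)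
    (ht : t ^ 2 < 1) (hu : u ^ 2 < 1)
    (hout : 1 < t ^ 2 + ((u - c * t) / d) ^ 2) :
    ∃ e : Bool × Bool,
      (∀ α β : ℝ, α ^ 2 + β ^ 2 ≤ 1 →
        ¬(sg e.1 * (α - t) > 0 ∧ sg e.2 * (c * α + d * β - u) > 0)) ∧
      (∀ p : Bool × Bool, p ≠ e →
        ∃ α β, α ^ 2 + β ^ 2 ≤ 1 ∧ sg p.1 * (α - t) > 0 ∧ sg p.2 * (c * α + d * β - u) > 0) := by
  classical
  set β₀ : ℝ := (u - c * t) / d with hβ₀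
  have hu' : u = c * t + d * β₀ := by rw [hβ₀]; field_simp; ring
  set p : ℝ := -t + c * β₀ / d with hp
  set q : ℝ := -β₀ / d with hq
  -- the separating inequality
  have key : ∀ α β : ℝ, α ^ 2 + β ^ 2 ≤ 1 →
      0 < p * (α - t) + q * (c * α + d * β - u) := by
    intro α β hn
    have hid : p * (α - t) + q * (c * α + d * β - u)
        = t ^ 2 + β₀ ^ 2 - (t * α + β₀ * β) := by
      rw [hu', hp, hq]; field_simp; ring
    rw [hid]
    nlinarith [sq_nonneg (t * β - β₀ * α), sq_nonneg (t * α + β₀ * β)]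
  -- q ≠ 0 with sign, from the point (t, 0)
  have hq1 : 0 < q * (c * t + d * 0 - u) := by
    have := key t 0 (by nlinarith)
    simpa using this
  -- p ≠ 0 with sign, from the point (c*u, d*u)
  have hp1 : 0 < p * (c * u - t) := by
    have hcu : c * (c * u) + d * (d * u) - u = 0 := by linear_combination u * hc
    have hnorm : (c * u) ^ 2 + (d * u) ^ 2 = u ^ 2 := by linear_combination u ^ 2 * hc
    have := key (c * u) (d * u) (by rw [hnorm]; linarith)
    rw [hcu] at this
    simpa using this
  have hpne : p ≠ 0 := by intro h; rw [h] at hp1; simp at hp1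
  have hqne : q ≠ 0 := by intro h; rw [h] at hq1; simp at hq1
  refine ⟨(if 0 < p then false else true, if 0 < q then false else true), ?_, ?_⟩
  · rintro α β hn ⟨hA, hB⟩
    simp only [sg] at hA hB
    have hkey := key α β hn
    have hArA : p * (α - t) < 0 := by
      rcases lt_or_gt_of_ne hpne with hneg | hpos
      · rw [if_neg (not_lt.mpr hneg.le)] at hA
        norm_num at hA
        nlinarith
      · rw [if_pos hpos] at hA
        norm_num at hA
        nlinarith
    have hBrB : q * (c * α + d * β - u) < 0 := by
      rcases lt_or_gt_of_ne hqne with hneg | hpos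
      · rw [if_neg (not_lt.mpr hneg.le)] at hB
        norm_num at hB
        nlinarith
      · rw [if_pos hpos] at hB
        norm_num at hB
        nlinarith
    linarith
  · -- the three other quadrants are nonempty
    set bp : Bool := if 0 < p then true else false with hbp
    set bq : Bool := if 0 < q then true else false with hbq
    have hsgq : sg bq * (c * t + d * 0 - u) > 0 := by
      rcases mul_pos_iff.mp hq1 with ⟨h1', h2'⟩ | ⟨h1', h2'⟩
      · rw [hbq, if_pos h1']; simpa [sg] using h2'
      · rw [hbq, if_neg (by exact not_lt.mpr h1'.le)]; simpa [sg] using h2'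
    have hsgp : sg bp * (c * u - t) > 0 := by
      rcases mul_pos_iff.mp hp1 with ⟨h1', h2'⟩ | ⟨h1', h2'⟩
      · rw [hbp, if_pos h1']; simpa [sg] using h2'
      · rw [hbp, if_neg (by exact not_lt.mpr h1'.le)]; simpa [sg] using h2'
    -- perturbation near (t,0): both signs for the first coordinate
    have near1 : ∀ ε : ℝ, ε = 1 ∨ ε = -1 → ∃ α β, α ^ 2 + β ^ 2 ≤ 1 ∧
        ε * (α - t) > 0 ∧ sg bq * (c * α + d * β - u) > 0 := by
      intro ε hε
      have hεsq : ε * ε = 1 := by rcases hε with h | h <;> rw [h] <;> ring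
      have hcont : Continuous (fun τ : ℝ => (t + τ * ε) ^ 2 + (0 - τ * ε * c / d) ^ 2) := by
        fun_prop
      obtain ⟨τ, hτpos, hτ⟩ := exists_pos_of_lt_one hcont (by simpa using ht)
      refine ⟨t + τ * ε, 0 - τ * ε * c / d, le_of_lt hτ, ?_, ?_⟩
      · have : ε * (t + τ * ε - t) = τ * (ε * ε) := by ring
        rw [this, hεsq]; simpa using hτpos
      · have : c * (t + τ * ε) + d * (0 - τ * ε * c / d) - u = c * t + d * 0 - u := by
          field_simp
          ring
        rw [this]; exact hsgq
    -- perturbation near (c*u, d*u): both signs for the second coordinate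
    have near2 : ∀ ε : ℝ, ε = 1 ∨ ε = -1 → ∃ α β, α ^ 2 + β ^ 2 ≤ 1 ∧
        sg bp * (α - t) > 0 ∧ ε * (c * α + d * β - u) > 0 := by
      intro ε hε
      have hεsq : ε * ε = 1 := by rcases hε with h | h <;> rw [h] <;> ring
      have hcont : Continuous (fun τ : ℝ => (c * u) ^ 2 + (d * u + τ * ε / d) ^ 2) := by
        fun_prop
      have hnorm : (c * u) ^ 2 + (d * u) ^ 2 = u ^ 2 := by linear_combination u ^ 2 * hc
      obtain ⟨τ, hτpos, hτ⟩ := exists_pos_of_lt_one hcont (by simpa [hnorm] using hu)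
      refine ⟨c * u, d * u + τ * ε / d, le_of_lt hτ, ?_, ?_⟩
      · exact hsgp
      · have h5 : d * (d * u + τ * ε / d) = d ^ 2 * u + τ * ε := by
          field_simp
        have : c * (c * u) + d * (d * u + τ * ε / d) - u = τ * ε := by
          rw [h5]; linear_combination u * hc
        rw [this]
        have : ε * (τ * ε) = τ * (ε * ε) := by ring
        rw [this, hεsq]; simpa using hτpos
    rintro ⟨b₁, b₂⟩ hne
    have hb : b₁ = bp ∨ b₂ = bq := by
      by_contra hcon
      push_neg at hcon
      apply hne
      have h1 : b₁ = (if 0 < p then false else true) := by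
        rw [hbp] at hcon; revert hcon; split_ifs <;> cases b₁ <;> simp
      have h2 : b₂ = (if 0 < q then false else true) := by
        rw [hbq] at hcon; revert hcon; split_ifs <;> cases b₂ <;> simp
      simp [h1, h2]
    rcases hb with rfl | rfl
    · obtain ⟨α, β, h₁, h₂, h₃⟩ := near2 (sg b₂) (sg_or b₂)
      exact ⟨α, β, h₁, h₂, h₃⟩
    · obtain ⟨α, β, h₁, h₂, h₃⟩ := near1 (sg b₁) (sg_or b₁)
      exact ⟨α, β, h₁, h₂, h₃⟩

variable {E : Type*} [NormedAddCommGroup E] [InnerProductSpace ℝ E]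

theorem norm_sq_decomp (s e₂ w : E) (hs : ‖s‖ = 1) (he : ‖e₂‖ = 1)
    (hse : ⟪s, e₂⟫_ℝ = 0) (hws : ⟪w, s⟫_ℝ = 0) (hwe : ⟪w, e₂⟫_ℝ = 0) (α β : ℝ) :
    ‖α • s + β • e₂ + w‖ ^ 2 = α ^ 2 + β ^ 2 + ‖w‖ ^ 2 := by
  have h1 : ‖α • s + β • e₂ + w‖ ^ 2 = ⟪α • s + β • e₂ + w, α • s + β • e₂ + w⟫_ℝ :=
    (real_inner_self_eq_norm_sq _).symm
  rw [h1]
  simp only [inner_add_left, inner_add_right, real_inner_smul_left, real_inner_smul_right]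
  rw [real_inner_self_eq_norm_sq, real_inner_self_eq_norm_sq, real_inner_self_eq_norm_sq,
    hs, he, hse, hws, hwe, real_inner_comm s e₂, real_inner_comm w s, real_inner_comm w e₂,
    hse, hws, hwe]
  ring

theorem exists_unit_orthogonal [FiniteDimensional ℝ E]
    (hdim : 3 ≤ Module.finrank ℝ E) (s e₂ : E) :
    ∃ ζ : E, ‖ζ‖ = 1 ∧ ⟪ζ, s⟫_ℝ = 0 ∧ ⟪ζ, e₂⟫_ℝ = 0 := by
  set f : E →ₗ[ℝ] ℝ × ℝ :=
    LinearMap.prod ((innerSL ℝ s).toLinearMap) ((innerSL ℝ e₂).toLinearMap) with hf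
  have hker : LinearMap.ker f ≠ ⊥ := by
    intro hbot
    have hinj : Function.Injective f := LinearMap.ker_eq_bot.mp hbot
    have := LinearMap.finrank_le_finrank_of_injective hinj
    rw [Module.finrank_prod, Module.finrank_self] at this
    omega
  obtain ⟨z, hz, hzne⟩ := (Submodule.ne_bot_iff _).mp hker
  have hzs : ⟪s, z⟫_ℝ = 0 := congrArg Prod.fst (LinearMap.mem_ker.mp hz)
  have hze : ⟪e₂, z⟫_ℝ = 0 := congrArg Prod.snd (LinearMap.mem_ker.mp hz)
  refine ⟨‖z‖⁻¹ • z, ?_, ?_, ?_⟩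
  · rw [norm_smul, norm_inv, norm_norm, inv_mul_cancel₀ (norm_ne_zero_iff.mpr hzne)]
  · rw [real_inner_smul_left, real_inner_comm, hzs, mul_zero]
  · rw [real_inner_smul_left, real_inner_comm, hze, mul_zero]

theorem norm_eq_one_of_sq {x : E} (h : ‖x‖ ^ 2 = 1) : ‖x‖ = 1 := by
  nlinarith [norm_nonneg x]

theorem inner_decomp (s e₂ w : E) (hs : ‖s‖ = 1) (he : ‖e₂‖ = 1)
    (hse : ⟪s, e₂⟫_ℝ = 0) (hws : ⟪w, s⟫_ℝ = 0) (hwe : ⟪w, e₂⟫_ℝ = 0) (α β : ℝ) :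
    ⟪α • s + β • e₂ + w, s⟫_ℝ = α ∧ ⟪α • s + β • e₂ + w, e₂⟫_ℝ = β := by
  have hse' : ⟪e₂, s⟫_ℝ = 0 := by rw [real_inner_comm]; exact hse
  constructor
  · simp only [inner_add_left, real_inner_smul_left]
    rw [real_inner_self_eq_norm_sq, hs, hse', hws]
    ring
  · simp only [inner_add_left, real_inner_smul_left]
    rw [real_inner_self_eq_norm_sq, he, hse, hwe]
    ring

set_option maxHeartbeats 2000000 in
theorem quad_pathconn [FiniteDimensional ℝ E] (hdim : 3 ≤ Module.finrank ℝ E)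
    (s e₂ : E) (hs : ‖s‖ = 1) (he : ‖e₂‖ = 1) (hse : ⟪s, e₂⟫_ℝ = 0)
    (c d t u ε₁ ε₂ : ℝ)
    (αs βs : ℝ) (hcirc : αs ^ 2 + βs ^ 2 = 1)
    (h1 : ε₁ * (αs - t) > 0) (h2 : ε₂ * (c * αs + d * βs - u) > 0) :
    IsPathConnected {x : E | ‖x‖ = 1 ∧ ε₁ * (⟪x, s⟫_ℝ - t) > 0 ∧
      ε₂ * (c * ⟪x, s⟫_ℝ + d * ⟪x, e₂⟫_ℝ - u) > 0} := by
  classical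
  obtain ⟨ζ, hζn, hζs, hζe⟩ := exists_unit_orthogonal hdim s e₂
  set vstar : E := αs • s + βs • e₂ with hvstar
  have hv0 : vstar = αs • s + βs • e₂ + 0 := by rw [add_zero]
  have hvs : ⟪vstar, s⟫_ℝ = αs := by
    rw [hv0]; exact (inner_decomp s e₂ 0 hs he hse (by simp) (by simp) αs βs).1
  have hve : ⟪vstar, e₂⟫_ℝ = βs := by
    rw [hv0]; exact (inner_decomp s e₂ 0 hs he hse (by simp) (by simp) αs βs).2
  have hvnorm : ‖vstar‖ = 1 := by
    apply norm_eq_one_of_sq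
    rw [hv0, norm_sq_decomp s e₂ 0 hs he hse (by simp) (by simp)]
    simpa using hcirc
  have hvmem : vstar ∈ {x : E | ‖x‖ = 1 ∧ ε₁ * (⟪x, s⟫_ℝ - t) > 0 ∧
      ε₂ * (c * ⟪x, s⟫_ℝ + d * ⟪x, e₂⟫_ℝ - u) > 0} := by
    refine ⟨hvnorm, ?_, ?_⟩
    · rw [hvs]; exact h1
    · rw [hvs, hve]; exact h2
  refine ⟨vstar, hvmem, ?_⟩
  intro x hx
  obtain ⟨hxn, hx1, hx2⟩ := hx
  set α₀ : ℝ := ⟪x, s⟫_ℝ with hα₀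
  set β₀ : ℝ := ⟪x, e₂⟫_ℝ with hβ₀
  set z : E := x - α₀ • s - β₀ • e₂ with hz
  have hse' : ⟪e₂, s⟫_ℝ = 0 := by rw [real_inner_comm]; exact hse
  have hzs : ⟪z, s⟫_ℝ = 0 := by
    simp only [hz, inner_sub_left, real_inner_smul_left]
    rw [real_inner_self_eq_norm_sq, hs, hse']
    ring
  have hze : ⟪z, e₂⟫_ℝ = 0 := by
    simp only [hz, inner_sub_left, real_inner_smul_left]
    rw [real_inner_self_eq_norm_sq, he, hse]
    ring
  have hxdec : x = α₀ • s + β₀ • e₂ + z := by rw [hz]; abel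
  have hnx : α₀ ^ 2 + β₀ ^ 2 + ‖z‖ ^ 2 = 1 := by
    rw [← norm_sq_decomp s e₂ z hs he hse hzs hze α₀ β₀, ← hxdec, hxn]; norm_num
  set ζx : E := if z = 0 then ζ else ‖z‖⁻¹ • z with hζx
  have hζxn : ‖ζx‖ = 1 := by
    rw [hζx]; split_ifs with h
    · exact hζn
    · rw [norm_smul, norm_inv, norm_norm, inv_mul_cancel₀ (norm_ne_zero_iff.mpr h)]
  have hζxs : ⟪ζx, s⟫_ℝ = 0 := by
    rw [hζx]; split_ifs with h
    · exact hζs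
    · rw [real_inner_smul_left, hzs, mul_zero]
  have hζxe : ⟪ζx, e₂⟫_ℝ = 0 := by
    rw [hζx]; split_ifs with h
    · exact hζe
    · rw [real_inner_smul_left, hze, mul_zero]
  have hzζ : z = ‖z‖ • ζx := by
    rw [hζx]; split_ifs with h
    · rw [h, norm_zero, zero_smul]
    · rw [smul_smul, mul_inv_cancel₀ (norm_ne_zero_iff.mpr h), one_smul]
  set A : ℝ → ℝ := fun τ => (1 - τ) * α₀ + τ * αs with hA
  set B : ℝ → ℝ := fun τ => (1 - τ) * β₀ + τ * βs with hB
  set γ : ℝ → E := fun τ => A τ • s + B τ • e₂ + Real.sqrt (1 - A τ ^ 2 - B τ ^ 2) • ζx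
    with hγ
  have hdisk : ∀ τ : ℝ, 0 ≤ τ → τ ≤ 1 → A τ ^ 2 + B τ ^ 2 ≤ 1 := by
    intro τ h0 h1'
    have hz2 : (0 : ℝ) ≤ ‖z‖ ^ 2 := sq_nonneg _
    simp only [hA, hB]
    nlinarith [sq_nonneg (α₀ - αs), sq_nonneg (β₀ - βs), sq_nonneg (α₀ * βs - β₀ * αs),
      mul_nonneg h0 (sub_nonneg.mpr h1')]
  have hγcont : Continuous γ := by
    apply Continuous.add
    apply Continuous.add
    · exact (by fun_prop : Continuous fun τ : ℝ => A τ • s)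
    · exact (by fun_prop : Continuous fun τ : ℝ => B τ • e₂)
    · apply Continuous.smul _ continuous_const
      exact Real.continuous_sqrt.comp (by fun_prop)
  have hγ0 : γ 0 = x := by
    have hA0 : A 0 = α₀ := by simp [hA]
    have hB0 : B 0 = β₀ := by simp [hB]
    have hsq : 1 - A 0 ^ 2 - B 0 ^ 2 = ‖z‖ ^ 2 := by rw [hA0, hB0]; linarith
    rw [hγ]
    simp only
    rw [hsq, hA0, hB0, Real.sqrt_sq (norm_nonneg z), ← hzζ, ← hxdec]
  have hγ1 : γ 1 = vstar := by
    have hA1 : A 1 = αs := by simp [hA]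
    have hB1 : B 1 = βs := by simp [hB]
    have hsq : 1 - A 1 ^ 2 - B 1 ^ 2 = 0 := by rw [hA1, hB1]; linarith
    rw [hγ]
    simp only
    rw [hsq, hA1, hB1, Real.sqrt_zero, zero_smul, add_zero]
  have hmem : ∀ τ : ℝ, 0 ≤ τ → τ ≤ 1 → γ τ ∈ {x : E | ‖x‖ = 1 ∧ ε₁ * (⟪x, s⟫_ℝ - t) > 0 ∧
      ε₂ * (c * ⟪x, s⟫_ℝ + d * ⟪x, e₂⟫_ℝ - u) > 0} := by
    intro τ h0 h1'
    have hd' := hdisk τ h0 h1'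
    have hsqrtnn : (0 : ℝ) ≤ 1 - A τ ^ 2 - B τ ^ 2 := by linarith
    set w : E := Real.sqrt (1 - A τ ^ 2 - B τ ^ 2) • ζx with hw
    have hwS : ⟪w, s⟫_ℝ = 0 := by rw [hw, real_inner_smul_left, hζxs, mul_zero]
    have hwE : ⟪w, e₂⟫_ℝ = 0 := by rw [hw, real_inner_smul_left, hζxe, mul_zero]
    have hγτ : γ τ = A τ • s + B τ • e₂ + w := by rw [hγ]
    have hiS : ⟪γ τ, s⟫_ℝ = A τ :=
      (inner_decomp s e₂ w hs he hse hwS hwE (A τ) (B τ)).1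
    have hiE : ⟪γ τ, e₂⟫_ℝ = B τ :=
      (inner_decomp s e₂ w hs he hse hwS hwE (A τ) (B τ)).2
    refine ⟨?_, ?_, ?_⟩
    · apply norm_eq_one_of_sq
      rw [hγτ, norm_sq_decomp s e₂ w hs he hse hwS hwE]
      rw [hw, norm_smul, hζxn, mul_one, Real.norm_eq_abs,
        abs_of_nonneg (Real.sqrt_nonneg _), Real.sq_sqrt hsqrtnn]
      ring
    · rw [hiS]
      have : ε₁ * (A τ - t) = (1 - τ) * (ε₁ * (α₀ - t)) + τ * (ε₁ * (αs - t)) := by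
        simp only [hA]; ring
      rw [this]
      rcases lt_or_eq_of_le h0 with h0' | h0'
      · have := mul_pos h0' h1
        nlinarith [mul_nonneg (sub_nonneg.mpr h1') (le_of_lt hx1)]
      · rw [← h0']; simpa using hx1
    · rw [hiS, hiE]
      have : ε₂ * (c * A τ + d * B τ - u) = (1 - τ) * (ε₂ * (c * α₀ + d * β₀ - u))
          + τ * (ε₂ * (c * αs + d * βs - u)) := by
        simp only [hA, hB]; ring
      rw [this]
      rcases lt_or_eq_of_le h0 with h0' | h0'
      · have := mul_pos h0' h2
        nlinarith [mul_nonneg (sub_nonneg.mpr h1') (le_of_lt hx2)]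
      · rw [← h0']; simpa using hx2
  have hjoined : JoinedIn {x : E | ‖x‖ = 1 ∧ ε₁ * (⟪x, s⟫_ℝ - t) > 0 ∧
      ε₂ * (c * ⟪x, s⟫_ℝ + d * ⟪x, e₂⟫_ℝ - u) > 0} x vstar := by
    refine ⟨⟨⟨fun τ => γ (τ : ℝ), hγcont.comp continuous_subtype_val⟩, ?_, ?_⟩, ?_⟩
    · simpa using hγ0
    · simpa using hγ1
    · intro τ
      exact hmem (τ : ℝ) τ.2.1 τ.2.2
  exact hjoined.symm

variable {E : Type*} [NormedAddCommGroup E] [InnerProductSpace ℝ E]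

theorem bessel_two (s e₂ x : E) (hs : ‖s‖ = 1) (he : ‖e₂‖ = 1) (hse : ⟪s, e₂⟫_ℝ = 0) :
    ⟪x, s⟫_ℝ ^ 2 + ⟪x, e₂⟫_ℝ ^ 2 ≤ ‖x‖ ^ 2 := by
  set α₀ : ℝ := ⟪x, s⟫_ℝ with hα₀
  set β₀ : ℝ := ⟪x, e₂⟫_ℝ with hβ₀
  set z : E := x - α₀ • s - β₀ • e₂ with hz
  have hse' : ⟪e₂, s⟫_ℝ = 0 := by rw [real_inner_comm]; exact hse
  have hzs : ⟪z, s⟫_ℝ = 0 := by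
    simp only [hz, inner_sub_left, real_inner_smul_left]
    rw [real_inner_self_eq_norm_sq, hs, hse']
    ring
  have hze : ⟪z, e₂⟫_ℝ = 0 := by
    simp only [hz, inner_sub_left, real_inner_smul_left]
    rw [real_inner_self_eq_norm_sq, he, hse]
    ring
  have hxdec : x = α₀ • s + β₀ • e₂ + z := by rw [hz]; abel
  calc α₀ ^ 2 + β₀ ^ 2 ≤ α₀ ^ 2 + β₀ ^ 2 + ‖z‖ ^ 2 := by nlinarith [sq_nonneg ‖z‖]
    _ = ‖x‖ ^ 2 := by rw [← norm_sq_decomp s e₂ z hs he hse hzs hze α₀ β₀, ← hxdec]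

theorem circle_to_quad (s e₂ : E) (hs : ‖s‖ = 1) (he : ‖e₂‖ = 1) (hse : ⟪s, e₂⟫_ℝ = 0)
    (c d t u ε₁ ε₂ α' β' : ℝ) (hcirc : α' ^ 2 + β' ^ 2 = 1)
    (hq1 : ε₁ * (α' - t) > 0) (hq2 : ε₂ * (c * α' + d * β' - u) > 0) :
    ∃ x : E, ‖x‖ = 1 ∧ ε₁ * (⟪x, s⟫_ℝ - t) > 0 ∧
      ε₂ * (c * ⟪x, s⟫_ℝ + d * ⟪x, e₂⟫_ℝ - u) > 0 := by
  refine ⟨α' • s + β' • e₂, ?_, ?_, ?_⟩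
  · apply norm_eq_one_of_sq
    have h0 : α' • s + β' • e₂ = α' • s + β' • e₂ + 0 := by rw [add_zero]
    rw [h0, norm_sq_decomp s e₂ 0 hs he hse (by simp) (by simp)]
    simpa using hcirc
  · have h0 : α' • s + β' • e₂ = α' • s + β' • e₂ + 0 := by rw [add_zero]
    rw [h0, (inner_decomp s e₂ 0 hs he hse (by simp) (by simp) α' β').1]
    exact hq1
  · have h0 : α' • s + β' • e₂ = α' • s + β' • e₂ + 0 := by rw [add_zero]
    rw [h0, (inner_decomp s e₂ 0 hs he hse (by simp) (by simp) α' β').1,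
      (inner_decomp s e₂ 0 hs he hse (by simp) (by simp) α' β').2]
    exact hq2

theorem sg_pos_inj {b b' : Bool} {r : ℝ} (h : sg b * r > 0) (h' : sg b' * r > 0) : b = b' := by
  cases b <;> cases b' <;> simp [sg] at h h' ⊢ <;> linarith

variable {E : Type*} [NormedAddCommGroup E] [InnerProductSpace ℝ E]

set_option maxHeartbeats 1000000 in
theorem main_general [FiniteDimensional ℝ E] (hdim : 3 ≤ Module.finrank ℝ E)
    (s s' : E) (hs : ‖s‖ = 1) (hs' : ‖s'‖ = 1)
    (t u : ℝ) (ht : |t| < 1) (hu : |u| < 1)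
    (hnp : s' ≠ s) (hnp' : s' ≠ -s) :
    ((({x : E | ⟪x, s⟫_ℝ = t} ∩ {x | ⟪x, s'⟫_ℝ = u})
        ∩ Metric.ball (0 : E) 1).Nonempty →
      Nat.card (ConnectedComponents
        {v : Metric.sphere (0 : E) 1 //
          ⟪(v : E), s⟫_ℝ ≠ t ∧ ⟪(v : E), s'⟫_ℝ ≠ u}) = 4) ∧
    ((({x : E | ⟪x, s⟫_ℝ = t} ∩ {x | ⟪x, s'⟫_ℝ = u})
        ∩ Metric.closedBall (0 : E) 1) = ∅ →
      Nat.card (ConnectedComponents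
        {v : Metric.sphere (0 : E) 1 //
          ⟪(v : E), s⟫_ℝ ≠ t ∧ ⟪(v : E), s'⟫_ℝ ≠ u}) = 3) := by
  classical
  -- orthonormal frame adapted to s, s'
  set c : ℝ := ⟪s', s⟫_ℝ with hc
  set s'' : E := s' - c • s with hs''
  have hs''s : ⟪s'', s⟫_ℝ = 0 := by
    simp only [hs'', inner_sub_left, real_inner_smul_left]
    rw [real_inner_self_eq_norm_sq, hs]
    ring
  have hs''ne : s'' ≠ 0 := by
    intro h0
    have hs'c : s' = c • s := by
      have := sub_eq_zero.mp h0
      rw [hs''] at h0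
      have : s' = c • s := by
        have := sub_eq_zero.mp h0
        exact this
      exact this
    have habs : |c| = 1 := by
      have := hs'
      rw [hs'c, norm_smul, hs, mul_one, Real.norm_eq_abs] at this
      exact this
    rcases abs_eq (by norm_num : (0:ℝ) ≤ 1) |>.mp habs with h | h
    · exact hnp (by rw [hs'c, h, one_smul])
    · exact hnp' (by rw [hs'c, h, neg_one_smul])
  set d : ℝ := ‖s''‖ with hdd
  have hd : 0 < d := norm_pos_iff.mpr hs''ne
  set e₂ : E := d⁻¹ • s'' with he₂def
  have he₂ : ‖e₂‖ = 1 := by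
    rw [he₂def, norm_smul, norm_inv, Real.norm_eq_abs, abs_of_pos hd, ← hdd,
      inv_mul_cancel₀ hd.ne']
  have hse₂ : ⟪s, e₂⟫_ℝ = 0 := by
    rw [he₂def, real_inner_smul_right, real_inner_comm, hs''s, mul_zero]
  have hs'dec : s' = c • s + d • e₂ := by
    rw [he₂def, smul_smul, mul_inv_cancel₀ hd.ne', one_smul, hs'']
    abel
  have hsub : ∀ x : E, ⟪x, s'⟫_ℝ = c * ⟪x, s⟫_ℝ + d * ⟪x, e₂⟫_ℝ := by
    intro x
    rw [hs'dec]
    simp [inner_add_right, real_inner_smul_right]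
  have hcd : c ^ 2 + d ^ 2 = 1 := by
    have h0 : s' = c • s + d • e₂ + 0 := by rw [add_zero]; exact hs'dec
    have := norm_sq_decomp s e₂ 0 hs he₂ hse₂ (by simp) (by simp) c d
    rw [← h0, hs'] at this
    simpa using this.symm
  have ht2 : t ^ 2 < 1 := by
    rcases abs_lt.mp ht with ⟨h1, h2⟩; nlinarith
  have hu2 : u ^ 2 < 1 := by
    rcases abs_lt.mp hu with ⟨h1, h2⟩; nlinarith
  -- the four quadrants
  set U : Bool × Bool → Set {v : Metric.sphere (0 : E) 1 //
      ⟪(v : E), s⟫_ℝ ≠ t ∧ ⟪(v : E), s'⟫_ℝ ≠ u} :=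
    fun pq => {v | sg pq.1 * (⟪(v.1 : E), s⟫_ℝ - t) > 0 ∧
      sg pq.2 * (⟪(v.1 : E), s'⟫_ℝ - u) > 0} with hU
  set j : {v : Metric.sphere (0 : E) 1 //
      ⟪(v : E), s⟫_ℝ ≠ t ∧ ⟪(v : E), s'⟫_ℝ ≠ u} → E := fun v => (v.1 : E) with hj
  have hjind : Topology.IsInducing j :=
    Topology.IsInducing.subtypeVal.comp Topology.IsInducing.subtypeVal
  have hjcont : Continuous j := hjind.continuous
  have himg : ∀ pq : Bool × Bool, j '' (U pq) = {x : E | ‖x‖ = 1 ∧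
      sg pq.1 * (⟪x, s⟫_ℝ - t) > 0 ∧
      sg pq.2 * (c * ⟪x, s⟫_ℝ + d * ⟪x, e₂⟫_ℝ - u) > 0} := by
    intro pq
    ext x
    constructor
    · rintro ⟨v, hv, rfl⟩
      refine ⟨mem_sphere_zero_iff_norm.mp v.1.2, hv.1, ?_⟩
      rw [← hsub]
      exact hv.2
    · rintro ⟨hxn, hx1, hx2⟩
      have hx2' : sg pq.2 * (⟪x, s'⟫_ℝ - u) > 0 := by rw [hsub]; exact hx2
      have hne1 : ⟪x, s⟫_ℝ ≠ t := by
        intro h; rw [h] at hx1; simp at hx1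
      have hne2 : ⟪x, s'⟫_ℝ ≠ u := by
        intro h; rw [h] at hx2'; simp at hx2'
      exact ⟨⟨⟨x, mem_sphere_zero_iff_norm.mpr hxn⟩, hne1, hne2⟩, ⟨hx1, hx2'⟩, rfl⟩
  have hopen : ∀ pq, IsOpen (U pq) := by
    intro pq
    have h1 : Continuous fun v : {v : Metric.sphere (0 : E) 1 //
        ⟪(v : E), s⟫_ℝ ≠ t ∧ ⟪(v : E), s'⟫_ℝ ≠ u} => sg pq.1 * (⟪j v, s⟫_ℝ - t) :=
      continuous_const.mul ((hjcont.inner continuous_const).sub continuous_const)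
    have h2 : Continuous fun v : {v : Metric.sphere (0 : E) 1 //
        ⟪(v : E), s⟫_ℝ ≠ t ∧ ⟪(v : E), s'⟫_ℝ ≠ u} => sg pq.2 * (⟪j v, s'⟫_ℝ - u) :=
      continuous_const.mul ((hjcont.inner continuous_const).sub continuous_const)
    exact (isOpen_lt continuous_const h1).inter (isOpen_lt continuous_const h2)
  have hconn : ∀ pq, IsPreconnected (U pq) := by
    intro pq
    by_cases hne : (U pq).Nonempty
    · obtain ⟨v, hv⟩ := hne
      have hxn : ‖j v‖ = 1 := mem_sphere_zero_iff_norm.mp v.1.2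
      have hb : ⟪j v, s⟫_ℝ ^ 2 + ⟪j v, e₂⟫_ℝ ^ 2 ≤ 1 := by
        have := bessel_two s e₂ (j v) hs he₂ hse₂
        rw [hxn] at this
        simpa using this
      have hcond2 : sg pq.2 * (c * ⟪j v, s⟫_ℝ + d * ⟪j v, e₂⟫_ℝ - u) > 0 := by
        rw [← hsub]; exact hv.2
      obtain ⟨α', β', hcirc, hq1, hq2⟩ := push_to_circle c d t u (sg pq.1) (sg pq.2)
        (⟪j v, s⟫_ℝ) (⟪j v, e₂⟫_ℝ) hd (sg_or _) (sg_or _) hb hv.1 hcond2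
      have hpc := quad_pathconn hdim s e₂ hs he₂ hse₂ c d t u (sg pq.1) (sg pq.2)
        α' β' hcirc hq1 hq2
      have := hpc.isConnected.isPreconnected
      rw [← himg pq] at this
      exact hjind.isPreconnected_image.mp this
    · rw [not_nonempty_iff_eq_empty.mp hne]
      exact isPreconnected_empty
  have hdisj : Pairwise (Function.onFun Disjoint U) := by
    intro pq pq' hne
    rw [Function.onFun, Set.disjoint_left]
    intro v hv hv'
    exact hne (Prod.ext (sg_pos_inj hv.1 hv'.1) (sg_pos_inj hv.2 hv'.2))
  have hcover : ⋃ pq, U pq = univ := by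
    ext v
    simp only [mem_iUnion, mem_univ, iff_true]
    have key : ∀ (r τ : ℝ), r ≠ τ → sg (if τ < r then true else false) * (r - τ) > 0 := by
      intro r τ hrτ
      split_ifs with h
      · simp only [sg, if_pos]; rcases lt_or_gt_of_ne hrτ with h' | h' <;> norm_num <;> linarith
      · have h' : r < τ := lt_of_le_of_ne (not_lt.mp h) hrτ
        simp only [sg]
        norm_num
        linarith
    exact ⟨(if t < ⟪(v.1 : E), s⟫_ℝ then true else false,
      if u < ⟪(v.1 : E), s'⟫_ℝ then true else false),
      key _ _ v.2.1, key _ _ v.2.2⟩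
  have hcount := comp_count U hopen hconn hdisj hcover
  constructor
  · -- four components
    intro hyp
    obtain ⟨x₀, ⟨⟨hx0s, hx0s'⟩, hx0b⟩⟩ := hyp
    have hx0n : ‖x₀‖ < 1 := mem_ball_zero_iff.mp hx0b
    have hn : ⟪x₀, s⟫_ℝ ^ 2 + ⟪x₀, e₂⟫_ℝ ^ 2 < 1 := by
      have := bessel_two s e₂ x₀ hs he₂ hse₂
      nlinarith [norm_nonneg x₀]
    have hall : ∀ pq : Bool × Bool, (U pq).Nonempty := by
      intro pq
      have hu0 : c * ⟪x₀, s⟫_ℝ + d * ⟪x₀, e₂⟫_ℝ = u := by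
        rw [← hsub]; exact hx0s'
      obtain ⟨α, β, hαβ, hq1, hq2⟩ := case1_nonempty c d t u (⟪x₀, s⟫_ℝ) (⟪x₀, e₂⟫_ℝ)
        (sg pq.1) (sg pq.2) hd hn hx0s hu0 (sg_or _) (sg_or _)
      obtain ⟨α', β', hcirc, hq1', hq2'⟩ := push_to_circle c d t u (sg pq.1) (sg pq.2)
        α β hd (sg_or _) (sg_or _) hαβ hq1 hq2
      obtain ⟨x, hx⟩ := circle_to_quad s e₂ hs he₂ hse₂ c d t u (sg pq.1) (sg pq.2)
        α' β' hcirc hq1' hq2'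
      have : x ∈ j '' (U pq) := by rw [himg pq]; exact hx
      obtain ⟨v, hv, _⟩ := this
      exact ⟨v, hv⟩
    rw [hcount]
    rw [Nat.card_congr (Equiv.subtypeUnivEquiv hall)]
    simp [Nat.card_eq_fintype_card]
  · -- three components
    intro hyp
    set β₀ : ℝ := (u - c * t) / d with hβ₀
    set x₀ : E := t • s + β₀ • e₂ with hx₀
    have hx₀dec : x₀ = t • s + β₀ • e₂ + 0 := by rw [add_zero]
    have hx₀s : ⟪x₀, s⟫_ℝ = t := by
      rw [hx₀dec]; exact (inner_decomp s e₂ 0 hs he₂ hse₂ (by simp) (by simp) t β₀).1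
    have hx₀e : ⟪x₀, e₂⟫_ℝ = β₀ := by
      rw [hx₀dec]; exact (inner_decomp s e₂ 0 hs he₂ hse₂ (by simp) (by simp) t β₀).2
    have hx₀s' : ⟪x₀, s'⟫_ℝ = u := by
      rw [hsub, hx₀s, hx₀e, hβ₀]
      field_simp
      ring
    have hout : 1 < t ^ 2 + β₀ ^ 2 := by
      by_contra hle
      push_neg at hle
      have hxnorm : ‖x₀‖ ^ 2 = t ^ 2 + β₀ ^ 2 := by
        rw [hx₀dec, norm_sq_decomp s e₂ 0 hs he₂ hse₂ (by simp) (by simp)]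
        simp
      have hxle : ‖x₀‖ ≤ 1 := by nlinarith [norm_nonneg x₀]
      exact (eq_empty_iff_forall_notMem.mp hyp x₀)
        ⟨⟨hx₀s, hx₀s'⟩, mem_closedBall_zero_iff.mpr hxle⟩
    obtain ⟨e, hempty, hnon⟩ := case2_count c d t u hd hcd ht2 hu2 (by rw [← hβ₀] at *; exact hout)
    have hiff : ∀ pq : Bool × Bool, (U pq).Nonempty ↔ pq ≠ e := by
      intro pq
      constructor
      · rintro ⟨v, hv⟩ rfl
        have hxn : ‖j v‖ = 1 := mem_sphere_zero_iff_norm.mp v.1.2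
        have hb : ⟪j v, s⟫_ℝ ^ 2 + ⟪j v, e₂⟫_ℝ ^ 2 ≤ 1 := by
          have := bessel_two s e₂ (j v) hs he₂ hse₂
          rw [hxn] at this
          simpa using this
        have hcond2 : sg pq.2 * (c * ⟪j v, s⟫_ℝ + d * ⟪j v, e₂⟫_ℝ - u) > 0 := by
          rw [← hsub]; exact hv.2
        exact hempty _ _ hb ⟨hv.1, hcond2⟩
      · intro hne
        obtain ⟨α, β, hαβ, hq1, hq2⟩ := hnon pq hne
        obtain ⟨α', β', hcirc, hq1', hq2'⟩ := push_to_circle c d t u (sg pq.1) (sg pq.2)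
          α β hd (sg_or _) (sg_or _) hαβ hq1 hq2
        obtain ⟨x, hx⟩ := circle_to_quad s e₂ hs he₂ hse₂ c d t u (sg pq.1) (sg pq.2)
          α' β' hcirc hq1' hq2'
        have : x ∈ j '' (U pq) := by rw [himg pq]; exact hx
        obtain ⟨v, hv, _⟩ := this
        exact ⟨v, hv⟩
    rw [hcount]
    rw [Nat.card_congr (Equiv.subtypeEquivRight hiff)]
    rw [Nat.card_eq_fintype_card]
    rw [Fintype.card_subtype_compl (p := fun pq : Bool × Bool => pq = e)]
    simp [Fintype.card_subtype_eq]

end Helpers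

/-- let `P = {⟪x,s⟫ = t}` and `Q = {⟪x,s'⟫ = u}` be hyperplanes of ℝ^{n+1}
(`n ≥ 2`) with non-parallel unit normals, each meeting the open unit ball. If `P ∩ Q`
meets the open unit ball then `S^n \ (P ∪ Q)` has exactly 4 connected components; if
`P ∩ Q` is disjoint from the closed unit ball it has exactly 3. -/
theorem two_hyperplane_complement_components (n : ℕ) (hn : 2 ≤ n)
    (s s' : EuclideanSpace ℝ (Fin (n + 1))) (hs : ‖s‖ = 1) (hs' : ‖s'‖ = 1)
    (t u : ℝ) (ht : |t| < 1) (hu : |u| < 1)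
    (hnp : s' ≠ s) (hnp' : s' ≠ -s) :
    ((({x : EuclideanSpace ℝ (Fin (n + 1)) | ⟪x, s⟫_ℝ = t} ∩ {x | ⟪x, s'⟫_ℝ = u})
        ∩ Metric.ball (0 : EuclideanSpace ℝ (Fin (n + 1))) 1).Nonempty →
      Nat.card (ConnectedComponents
        {v : Metric.sphere (0 : EuclideanSpace ℝ (Fin (n + 1))) 1 //
          ⟪(v : EuclideanSpace ℝ (Fin (n + 1))), s⟫_ℝ ≠ t ∧
          ⟪(v : EuclideanSpace ℝ (Fin (n + 1))), s'⟫_ℝ ≠ u}) = 4) ∧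
    ((({x : EuclideanSpace ℝ (Fin (n + 1)) | ⟪x, s⟫_ℝ = t} ∩ {x | ⟪x, s'⟫_ℝ = u})
        ∩ Metric.closedBall (0 : EuclideanSpace ℝ (Fin (n + 1))) 1) = ∅ →
      Nat.card (ConnectedComponents
        {v : Metric.sphere (0 : EuclideanSpace ℝ (Fin (n + 1))) 1 //
          ⟪(v : EuclideanSpace ℝ (Fin (n + 1))), s⟫_ℝ ≠ t ∧
          ⟪(v : EuclideanSpace ℝ (Fin (n + 1))), s'⟫_ℝ ≠ u}) = 3) := by
  have hdim : 3 ≤ Module.finrank ℝ (EuclideanSpace ℝ (Fin (n + 1))) := by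
    rw [finrank_euclideanSpace_fin]
    omega
  exact main_general hdim s s' hs hs' t u ht hu hnp hnp'
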